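/- Let α = α₁ + i α₂ ∈ ℂ with α ≠ 0 (α₁, α₂ ∈ ℝ). Define x₁, x₂ : ℝ → ℝ by x₁(t) = |α|^{-2} ( α₂ sinh(α₂ t) sin(α₁ t) − α₁ cosh(α₂ t) cos(α₁ t) ) and x₂(t) = |α|^{-2} ( α₂ sinh(α₂ t) cos(α₁ t) + α₁ cosh(α₂ t) sin(α₁ t) ). Then the map ℝ → ℝ², t ↦ (x₁(t), x₂(t)), is injective if and only if α₁ = 0. -/

import Mathlib

open Real

/-- The final embeddedness computation in the uniqueness of the helicoid: the planar
curve coming from the Weierstrass representation with Gauss map `e^{αz}` is injective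
if and only if `α₁ = Re α = 0`. -/
theorem stmt4 (α₁ α₂ : ℝ) (hα : (α₁ : ℂ) + (α₂ : ℂ) * Complex.I ≠ 0)
    (x₁ x₂ : ℝ → ℝ)
    (hx₁ : ∀ t, x₁ t = (α₁ ^ 2 + α₂ ^ 2)⁻¹ *
      (α₂ * Real.sinh (α₂ * t) * Real.sin (α₁ * t) -
        α₁ * Real.cosh (α₂ * t) * Real.cos (α₁ * t)))
    (hx₂ : ∀ t, x₂ t = (α₁ ^ 2 + α₂ ^ 2)⁻¹ *
      (α₂ * Real.sinh (α₂ * t) * Real.cos (α₁ * t) +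
        α₁ * Real.cosh (α₂ * t) * Real.sin (α₁ * t))) :
    Function.Injective (fun t : ℝ => (x₁ t, x₂ t)) ↔ α₁ = 0 := by
  constructor
  · -- injective → α₁ = 0 (contrapositive)
    intro hinj
    by_contra h1
    -- the unscaled second coordinate
    set g : ℝ → ℝ := fun t =>
      α₂ * Real.sinh (α₂ * t) * Real.cos (α₁ * t) +
        α₁ * Real.cosh (α₂ * t) * Real.sin (α₁ * t) with hg
    have hgc : Continuous g := by fun_prop
    set s : ℝ := π / (2 * α₁) with hs
    set u : ℝ := 3 * π / (2 * α₁) with hu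
    have hαs : α₁ * s = π / 2 := by rw [hs]; field_simp
    have hαu : α₁ * u = 3 * π / 2 := by rw [hu]; field_simp
    have hgs : g s = α₁ * Real.cosh (α₂ * s) := by
      simp [hg, hαs, Real.cos_pi_div_two, Real.sin_pi_div_two]
    have hgu : g u = -(α₁ * Real.cosh (α₂ * u)) := by
      have hc : Real.cos (3 * π / 2) = 0 := by
        have : (3 : ℝ) * π / 2 = π / 2 + π := by ring
        rw [this, Real.cos_add_pi, Real.cos_pi_div_two, neg_zero]
      have hsin : Real.sin (3 * π / 2) = -1 := by
        have : (3 : ℝ) * π / 2 = π / 2 + π := by ring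
        rw [this, Real.sin_add_pi, Real.sin_pi_div_two]
      simp [hg, hαu, hc, hsin]
    have hcs : 0 < Real.cosh (α₂ * s) := Real.cosh_pos _
    have hcu : 0 < Real.cosh (α₂ * u) := Real.cosh_pos _
    -- IVT gives a zero of g between s and u
    have hmem : (0 : ℝ) ∈ Set.uIcc (g s) (g u) := by
      rw [Set.mem_uIcc, hgs, hgu]
      rcases lt_or_gt_of_ne h1 with h | h
      · left
        constructor
        · nlinarith
        · nlinarith
      · right
        constructor
        · nlinarith
        · nlinarith
    obtain ⟨t, ht, hgt⟩ := intermediate_value_uIcc (f := g) (a := s) (b := u)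
      (hgc.continuousOn) hmem
    have hπ : 0 < π := Real.pi_pos
    have ht0 : t ≠ 0 := by
      rcases lt_or_gt_of_ne h1 with h | h
      · -- α₁ < 0 : s, u < 0
        have hs0 : s < 0 := by
          rw [hs]; exact div_neg_of_pos_of_neg hπ (by linarith)
        have hu0 : u < 0 := by
          rw [hu]; exact div_neg_of_pos_of_neg (by linarith) (by linarith)
        have := ht.2
        have hmax : max s u < 0 := max_lt hs0 hu0
        rw [Set.mem_uIcc] at ht
        rcases ht with ⟨_, h2⟩ | ⟨_, h2⟩ <;> intro h0 <;> rw [h0] at h2 <;> linarith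
      · have hs0 : 0 < s := by
          rw [hs]; exact div_pos hπ (by linarith)
        have hu0 : 0 < u := by
          rw [hu]; exact div_pos (by linarith) (by linarith)
        rw [Set.mem_uIcc] at ht
        rcases ht with ⟨h2, _⟩ | ⟨h2, _⟩ <;> intro h0 <;> rw [h0] at h2 <;> linarith
    -- x₂ t = 0 and x₂ (-t) = 0, x₁ even: f t = f (-t)
    have hx2t : x₂ t = 0 := by rw [hx₂]; rw [hg] at hgt; simp [hgt]
    have hx2nt : x₂ (-t) = 0 := by
      rw [hx₂]
      have : α₂ * Real.sinh (α₂ * -t) * Real.cos (α₁ * -t) +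
          α₁ * Real.cosh (α₂ * -t) * Real.sin (α₁ * -t) = -(g t) := by
        simp [hg, mul_neg, Real.sinh_neg, Real.cosh_neg, Real.sin_neg, Real.cos_neg]
        ring
      rw [this, hgt]; simp
    have hx1 : x₁ (-t) = x₁ t := by
      rw [hx₁, hx₁]
      simp [mul_neg, Real.sinh_neg, Real.cosh_neg, Real.sin_neg, Real.cos_neg]
    have : t = -t := hinj (by simp [hx1, hx2t, hx2nt])
    have : t = 0 := by linarith
    exact ht0 this
  · -- α₁ = 0 → injective
    intro h1
    subst h1
    have hα2 : α₂ ≠ 0 := by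
      intro h; rw [h] at hα; simp at hα
    intro a b hab
    have h2 : x₂ a = x₂ b := congrArg Prod.snd hab
    rw [hx₂, hx₂] at h2
    simp only [Real.sin_zero, Real.cos_zero, zero_mul, mul_zero, mul_one, add_zero,
      zero_add] at h2
    have hinv : ((0:ℝ) ^ 2 + α₂ ^ 2)⁻¹ ≠ 0 := by positivity
    have : Real.sinh (α₂ * a) = Real.sinh (α₂ * b) := by
      have := mul_left_cancel₀ hinv h2
      exact mul_left_cancel₀ hα2 this
    have := Real.sinh_injective this
    exact mul_left_cancel₀ hα2 this
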